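/- The multivariate generating function ∑_{m_1,...,m_d ≥ 0} c(m_1,...,m_d) x_1^{m_1}...x_d^{m_d} equals (∏_{i=1}^d x_i) · (∏_{i=1}^d (1-x_i))^{-1} · (1 - ∑_{i=2}^d (i-1) e_i(x_1,...,x_d))^{-1}, where e_i is the elementary symmetric polynomial of degree i. -/

import Mathlib

open MvPolynomial Finset

/-- `t̂_i = (∑_j t_j) - t_i`. -/
noncomputable def that (d : ℕ) (i : Fin d) : MvPolynomial (Fin d) ℤ :=
  (∑ j, X j) - X i

/-- The polynomial `∏_i ∑_{k=0}^{m_i-1} t̂_i^k t_i^{m_i-1-k}`. -/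
noncomputable def cPoly (d : ℕ) (m : Fin d → ℕ) : MvPolynomial (Fin d) ℤ :=
  ∏ i, ∑ k ∈ Finset.range (m i), (that d i) ^ k * (X i) ^ (m i - 1 - k)

/-- `c(m_1,…,m_d)`: the coefficient of `∏ t_i^{m_i-1}` in `cPoly`. -/
noncomputable def c (d : ℕ) (m : Fin d → ℕ) : ℤ :=
  MvPolynomial.coeff (Finsupp.equivFunOnFinite.symm fun i => m i - 1) (cPoly d m)

/-- The polynomial `∏_i (∑_{j≠i} t_j)^{k_i}`. -/
noncomputable def fPoly (d : ℕ) (k : Fin d → ℕ) : MvPolynomial (Fin d) ℤ :=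
  ∏ i, (∑ j ∈ Finset.univ.erase i, X j) ^ k i

/-- `f(k_1,…,k_d)`: the coefficient of `∏ t_i^{k_i}` in `fPoly`. -/
noncomputable def fC (d : ℕ) (k : Fin d → ℕ) : ℤ :=
  MvPolynomial.coeff (Finsupp.equivFunOnFinite.symm k) (fPoly d k)
/-- `c` extended by `0` when some `m_i = 0`. -/
noncomputable def cFull (d : ℕ) (m : Fin d → ℕ) : ℤ :=
  if ∀ i, 1 ≤ m i then c d m else 0

/-- The generating function `∑ c(m) x^m` as a formal power series. -/
noncomputable def Cser (d : ℕ) : MvPowerSeries (Fin d) ℤ :=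
  fun e => cFull d (fun i => e i)

/-! ### Auxiliary definitions -/

/-- The generating function `∑ f(k) x^k`. -/
noncomputable def Fser (d : ℕ) : MvPowerSeries (Fin d) ℤ :=
  fun e => fC d (fun i => e i)

/-- The sum of all variables. -/
noncomputable def sPol (d : ℕ) : MvPolynomial (Fin d) ℤ := ∑ j, X j

/-- The `0/1` indicator finsupp of a finite set. -/
noncomputable def oneS {d : ℕ} (S : Finset (Fin d)) : Fin d →₀ ℕ :=
  ∑ i ∈ S, Finsupp.single i 1

section Aux

variable {d : ℕ}

lemma coeff_Cser (n : Fin d →₀ ℕ) :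
    MvPowerSeries.coeff n (Cser d) = cFull d (fun i => n i) := rfl

lemma coeff_Fser (n : Fin d →₀ ℕ) :
    MvPowerSeries.coeff n (Fser d) = fC d (fun i => n i) := rfl

lemma X_add_that (i : Fin d) : X i + that d i = sPol d := by
  rw [that, sPol]; ring

lemma fPoly_eq (k : Fin d → ℕ) : fPoly d k = ∏ i, that d i ^ k i := by
  unfold fPoly
  refine Finset.prod_congr rfl fun i _ => ?_
  congr 1
  rw [that, ← Finset.sum_erase_add Finset.univ _ (Finset.mem_univ i)]
  ring

lemma oneS_apply (S : Finset (Fin d)) (j : Fin d) :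
    oneS S j = if j ∈ S then 1 else 0 := by
  classical
  rw [oneS, Finset.sum_apply']
  simp [Finsupp.single_apply]

lemma oneS_le_iff (S : Finset (Fin d)) (n : Fin d →₀ ℕ) :
    oneS S ≤ n ↔ ∀ i ∈ S, 1 ≤ n i := by
  rw [Finsupp.le_def]
  constructor
  · intro h i hi
    have := h i
    rwa [oneS_apply, if_pos hi] at this
  · intro h i
    rw [oneS_apply]
    by_cases hi : i ∈ S
    · rw [if_pos hi]; exact h i hi
    · simp [hi]

lemma prod_X_eq_monomial (S : Finset (Fin d)) :
    (∏ i ∈ S, X i : MvPolynomial (Fin d) ℤ) = monomial (oneS S) 1 := by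
  classical
  induction S using Finset.induction_on with
  | empty => simp [oneS]
  | insert a s ha ih =>
      have h1 : oneS (insert a s) = Finsupp.single a 1 + oneS s := by
        rw [oneS, oneS, Finset.sum_insert ha]
      rw [Finset.prod_insert ha, ih, h1,
        show (X a : MvPolynomial (Fin d) ℤ) = monomial (Finsupp.single a 1) 1 from rfl,
        monomial_mul, one_mul]

lemma prod_univ_X_pow (μ : Fin d →₀ ℕ) :
    (∏ i, X i ^ μ i : MvPolynomial (Fin d) ℤ) = monomial μ 1 := by
  rw [← MvPolynomial.prod_X_pow_eq_monomial]
  exact (Finset.prod_subset (Finset.subset_univ _) (fun x _ hx => by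
    simp [Finsupp.notMem_support_iff.mp hx])).symm

lemma prod_X_pow_fun (e : Fin d → ℕ) :
    (∏ i, X i ^ e i : MvPolynomial (Fin d) ℤ) = monomial (Finsupp.equivFunOnFinite.symm e) 1 := by
  rw [← prod_univ_X_pow (Finsupp.equivFunOnFinite.symm e)]
  rfl

/-- weighted powerset sum -/
lemma sum_powerset_card_weighted {R : Type*} [CommRing R] {α : Type*} [DecidableEq α]
    (T : Finset α) (f g : α → R) :
    ∑ S ∈ T.powerset, (S.card : R) * ((∏ i ∈ S, f i) * ∏ i ∈ T \ S, g i)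
      = ∑ i ∈ T, f i * ∏ j ∈ T.erase i, (f j + g j) := by
  classical
  have step1 : ∑ S ∈ T.powerset, (S.card : R) * ((∏ i ∈ S, f i) * ∏ i ∈ T \ S, g i)
      = ∑ i ∈ T, ∑ S ∈ T.powerset,
          (if i ∈ S then ((∏ j ∈ S, f j) * ∏ j ∈ T \ S, g j) else 0) := by
    rw [Finset.sum_comm]
    refine Finset.sum_congr rfl fun S hS => ?_
    have hcard : ((S.card : R)) = ∑ i ∈ T, (if i ∈ S then (1 : R) else 0) := by
      rw [Finset.sum_ite_mem, Finset.inter_eq_right.mpr (Finset.mem_powerset.mp hS),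
        Finset.sum_const, nsmul_eq_mul, mul_one]
    rw [hcard, Finset.sum_mul]
    refine Finset.sum_congr rfl fun i _ => ?_
    split_ifs <;> simp
  rw [step1]
  refine Finset.sum_congr rfl fun i hi => ?_
  have hierase : i ∉ T.erase i := Finset.notMem_erase i T
  have hT' : T = insert i (T.erase i) := (Finset.insert_erase hi).symm
  rw [hT', Finset.sum_powerset_insert hierase]
  have h0 : ∑ t ∈ (T.erase i).powerset,
      (if i ∈ t then ((∏ j ∈ t, f j) * ∏ j ∈ insert i (T.erase i) \ t, g j) else 0) = 0 := by
    refine Finset.sum_eq_zero fun t ht => ?_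
    exact if_neg (fun hit => (Finset.mem_erase.mp (Finset.mem_powerset.mp ht hit)).1 rfl)
  rw [h0, zero_add]
  have h2 : ∀ t ∈ (T.erase i).powerset,
      (if i ∈ insert i t then
        ((∏ j ∈ insert i t, f j) * ∏ j ∈ insert i (T.erase i) \ insert i t, g j) else 0)
      = f i * ((∏ j ∈ t, f j) * ∏ j ∈ (T.erase i) \ t, g j) := by
    intro t ht
    have hit : i ∉ t := fun h => (Finset.mem_erase.mp (Finset.mem_powerset.mp ht h)).1 rfl
    have hsd : insert i (T.erase i) \ insert i t = (T.erase i) \ t := by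
      ext x
      simp only [Finset.mem_sdiff, Finset.mem_insert, Finset.mem_erase]
      constructor
      · rintro ⟨hx1 | hx1, hx2⟩
        · exact absurd (Or.inl hx1) hx2
        · exact ⟨hx1, fun hxt => hx2 (Or.inr hxt)⟩
      · rintro ⟨⟨hxne, hxT⟩, hxt⟩
        exact ⟨Or.inr ⟨hxne, hxT⟩, by rintro (h | h) <;> [exact hxne h; exact hxt h]⟩
    rw [if_pos (Finset.mem_insert_self i t), Finset.prod_insert hit, hsd, mul_assoc]
  rw [Finset.sum_congr rfl h2, ← Finset.mul_sum, ← Finset.prod_add,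
    Finset.erase_insert hierase]

lemma bracket (T : Finset (Fin d)) (hT : T.Nonempty) :
    ∑ S ∈ T.powerset, C (1 - (S.card : ℤ)) * ((∏ i ∈ S, X i) * ∏ i ∈ T \ S, that d i)
      = (∑ i ∈ Finset.univ \ T, X i) * sPol d ^ (T.card - 1) := by
  classical
  have expand : ∀ S : Finset (Fin d),
      C (1 - (S.card : ℤ)) * ((∏ i ∈ S, X i) * ∏ i ∈ T \ S, that d i)
      = ((∏ i ∈ S, X i) * ∏ i ∈ T \ S, that d i)
        - (S.card : MvPolynomial (Fin d) ℤ) * ((∏ i ∈ S, X i) * ∏ i ∈ T \ S, that d i) := by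
    intro S
    rw [map_sub, map_one, sub_mul, one_mul, map_natCast (C : ℤ →+* MvPolynomial (Fin d) ℤ)]
  rw [Finset.sum_congr rfl (fun S _ => expand S), Finset.sum_sub_distrib, ← Finset.prod_add,
    sum_powerset_card_weighted T (fun i => (X i : MvPolynomial (Fin d) ℤ)) (that d)]
  simp_rw [X_add_that, Finset.prod_const]
  have hcard : ∀ i ∈ T, (T.erase i).card = T.card - 1 := fun i hi =>
    Finset.card_erase_of_mem hi
  have step : ∑ i ∈ T, X i * (sPol d) ^ (T.erase i).card
      = (∑ i ∈ T, X i) * sPol d ^ (T.card - 1) := by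
    rw [Finset.sum_mul]
    exact Finset.sum_congr rfl fun i hi => by rw [hcard i hi]
  rw [step]
  have hsub : sPol d - ∑ i ∈ T, X i = ∑ i ∈ Finset.univ \ T, X i := by
    rw [sPol, ← Finset.sum_sdiff (Finset.subset_univ T)]
    ring
  obtain ⟨e, he⟩ : ∃ e, T.card = e + 1 :=
    ⟨T.card - 1, (Nat.succ_pred_eq_of_pos hT.card_pos).symm⟩
  rw [he, Nat.add_sub_cancel, ← hsub]
  ring

lemma coeff_mul_coe_sum (φ : MvPowerSeries (Fin d) ℤ) (n : Fin d →₀ ℕ)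
    (co : Finset (Fin d) → ℤ) :
    MvPowerSeries.coeff n
        (φ * ((∑ S ∈ (Finset.univ : Finset (Fin d)).powerset, co S • ∏ i ∈ S, X i :
          MvPolynomial (Fin d) ℤ) : MvPowerSeries (Fin d) ℤ))
      = ∑ S ∈ (Finset.univ : Finset (Fin d)).powerset,
          co S * (if oneS S ≤ n then MvPowerSeries.coeff (n - oneS S) φ else 0) := by
  classical
  have hpoly : (∑ S ∈ (Finset.univ : Finset (Fin d)).powerset, co S • ∏ i ∈ S, X i :
      MvPolynomial (Fin d) ℤ)
      = ∑ S ∈ (Finset.univ : Finset (Fin d)).powerset, co S • (monomial (oneS S) (1 : ℤ)) :=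
    Finset.sum_congr rfl fun S _ => by rw [prod_X_eq_monomial]
  have hcoe : ((∑ S ∈ (Finset.univ : Finset (Fin d)).powerset, co S • (monomial (oneS S) (1 : ℤ)) :
      MvPolynomial (Fin d) ℤ) : MvPowerSeries (Fin d) ℤ)
      = ∑ S ∈ (Finset.univ : Finset (Fin d)).powerset,
          co S • (MvPowerSeries.monomial (oneS S) (1 : ℤ)) := by
    ext m
    rw [MvPolynomial.coeff_coe, MvPolynomial.coeff_sum, map_sum]
    refine Finset.sum_congr rfl fun S _ => ?_
    rw [MvPolynomial.coeff_smul, map_smul, MvPolynomial.coeff_monomial,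
      MvPowerSeries.coeff_monomial]
    simp [eq_comm]
  rw [hpoly, hcoe, Finset.mul_sum, map_sum]
  refine Finset.sum_congr rfl fun S _ => ?_
  rw [mul_smul_comm, map_smul, MvPowerSeries.coeff_mul_monomial, smul_eq_mul]
  split_ifs with h
  · rw [mul_one]
  · rfl

lemma Bpoly :
    (1 - ∑ i ∈ Finset.Icc 2 d, ((i : ℤ) - 1) • MvPolynomial.esymm (Fin d) ℤ i :
        MvPolynomial (Fin d) ℤ)
      = ∑ S ∈ (Finset.univ : Finset (Fin d)).powerset, (1 - (S.card : ℤ)) • ∏ i ∈ S, X i := by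
  classical
  have h1 : ∑ S ∈ (Finset.univ : Finset (Fin d)).powerset, (1 - (S.card : ℤ)) • ∏ i ∈ S, X i
      = ∑ j ∈ Finset.range (d + 1), (1 - (j : ℤ)) • MvPolynomial.esymm (Fin d) ℤ j := by
    rw [Finset.sum_powerset, Finset.card_univ, Fintype.card_fin]
    refine Finset.sum_congr rfl fun j hj => ?_
    rw [MvPolynomial.esymm, Finset.smul_sum]
    refine Finset.sum_congr rfl fun S hS => ?_
    rw [(Finset.mem_powersetCard.mp hS).2]
  have hterm : ∀ j : ℕ, (1 - (j : ℤ)) • MvPolynomial.esymm (Fin d) ℤ j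
      = (if j = 0 then (1 : MvPolynomial (Fin d) ℤ) else 0)
        + (if 2 ≤ j then -(((j : ℤ) - 1) • MvPolynomial.esymm (Fin d) ℤ j) else 0) := by
    intro j
    match j with
    | 0 => simp
    | 1 => simp
    | (k + 2) =>
        rw [if_neg (by omega), if_pos (by omega), zero_add, ← neg_smul]
        congr 1
        ring
  symm
  rw [h1, Finset.sum_congr rfl fun j _ => hterm j, Finset.sum_add_distrib,
    Finset.sum_ite_eq' (Finset.range (d + 1)) 0 fun _ => (1 : MvPolynomial (Fin d) ℤ),
    if_pos (Finset.mem_range.mpr (Nat.succ_pos d)), ← Finset.sum_filter]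
  have hfil : (Finset.range (d + 1)).filter (fun j => 2 ≤ j) = Finset.Icc 2 d := by
    ext j
    simp only [Finset.mem_filter, Finset.mem_range, Finset.mem_Icc]
    omega
  rw [hfil, sub_eq_add_neg, ← Finset.sum_neg_distrib]

lemma Apoly :
    ((∏ i, (1 - X i)) : MvPolynomial (Fin d) ℤ)
      = ∑ S ∈ (Finset.univ : Finset (Fin d)).powerset, ((-1 : ℤ) ^ S.card) • ∏ i ∈ S, X i := by
  classical
  have h0 : (∏ i, (1 - X i) : MvPolynomial (Fin d) ℤ)
      = ∏ i, ((-1 : MvPolynomial (Fin d) ℤ) * X i + 1) :=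
    Finset.prod_congr rfl fun i _ => by ring
  rw [h0, Finset.prod_add]
  refine Finset.sum_congr rfl fun S _ => ?_
  rw [Finset.prod_const_one, mul_one, Finset.prod_mul_distrib, Finset.prod_const,
    MvPolynomial.smul_eq_C_mul, map_pow, map_neg, map_one]

lemma fC_zero : fC d (fun _ => 0) = 1 := by
  rw [fC, fPoly]
  simp only [pow_zero, Finset.prod_const_one]
  have h0 : (Finsupp.equivFunOnFinite.symm fun _ : Fin d => (0 : ℕ)) = 0 := by
    ext i
    rfl
  rw [h0, MvPolynomial.coeff_one, if_pos rfl]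

lemma key2 (n : Fin d →₀ ℕ) :
    ∑ S ∈ (Finset.univ : Finset (Fin d)).powerset,
        (1 - (S.card : ℤ)) * (if oneS S ≤ n then fC d (fun i => (n - oneS S) i) else 0)
      = if n = 0 then 1 else 0 := by
  classical
  by_cases hn : n = 0
  · subst hn
    rw [if_pos rfl]
    rw [Finset.sum_eq_single_of_mem ∅ (Finset.empty_mem_powerset _)]
    · have h0 : oneS (∅ : Finset (Fin d)) = 0 := by simp [oneS]
      rw [h0, if_pos le_rfl]
      have : fC d (fun i => ((0 : Fin d →₀ ℕ) - 0) i) = 1 := by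
        rw [show (fun i => ((0 : Fin d →₀ ℕ) - 0) i) = fun _ : Fin d => (0 : ℕ) by
          funext i; simp]
        exact fC_zero
      rw [this]
      norm_num
    · intro S _ hSne
      obtain ⟨i, hi⟩ := Finset.nonempty_iff_ne_empty.mpr hSne
      rw [if_neg, mul_zero]
      intro hle
      have h1 := (oneS_le_iff S 0).mp hle i hi
      simp at h1
  · rw [if_neg hn]
    have hT : n.support.Nonempty := Finsupp.support_nonempty_iff.mpr hn
    set T := n.support with hTdef
    have hrestrict : ∑ S ∈ (Finset.univ : Finset (Fin d)).powerset,
          (1 - (S.card : ℤ)) * (if oneS S ≤ n then fC d (fun i => (n - oneS S) i) else 0)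
        = ∑ S ∈ T.powerset,
          (1 - (S.card : ℤ)) * (if oneS S ≤ n then fC d (fun i => (n - oneS S) i) else 0) := by
      symm
      refine Finset.sum_subset (Finset.powerset_mono.mpr (Finset.subset_univ T)) ?_
      intro S _ hS
      have hnle : ¬ oneS S ≤ n := by
        intro hle
        apply hS
        rw [Finset.mem_powerset]
        intro i hi
        have h1 := (oneS_le_iff S n).mp hle i hi
        exact Finsupp.mem_support_iff.mpr (by omega)
      rw [if_neg hnle, mul_zero]
    rw [hrestrict]
    set q : MvPolynomial (Fin d) ℤ := ∏ i ∈ T, that d i ^ (n i - 1) with hq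
    have hterm : ∀ S ∈ T.powerset,
        (1 - (S.card : ℤ)) * (if oneS S ≤ n then fC d (fun i => (n - oneS S) i) else 0)
        = MvPolynomial.coeff n
            (C (1 - (S.card : ℤ)) * (q * ((∏ i ∈ S, X i) * ∏ i ∈ T \ S, that d i))) := by
      intro S hS
      have hST : S ⊆ T := Finset.mem_powerset.mp hS
      have hle : oneS S ≤ n := (oneS_le_iff S n).mpr fun i hi => by
        have h1 := hST hi
        rw [hTdef] at h1
        have := Finsupp.mem_support_iff.mp h1
        omega
      rw [if_pos hle, MvPolynomial.coeff_C_mul]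
      congr 1
      rw [fC]
      have hfun : (Finsupp.equivFunOnFinite.symm fun i => (n - oneS S) i) = n - oneS S :=
        Finsupp.equivFunOnFinite_symm_coe _
      rw [hfun, fPoly_eq]
      have hTprod : (∏ i, that d i ^ ((n - oneS S) i)) = ∏ i ∈ T, that d i ^ ((n - oneS S) i) := by
        symm
        refine Finset.prod_subset (Finset.subset_univ T) ?_
        intro x _ hx
        have hnx : n x = 0 := Finsupp.notMem_support_iff.mp (by rwa [← hTdef])
        have hz : (n - oneS S) x = 0 := by
          rw [Finsupp.tsub_apply, hnx]
          simp
        rw [hz, pow_zero]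
      have hpt : ∀ i ∈ T, that d i ^ ((n - oneS S) i)
          = that d i ^ (n i - 1) * (if i ∈ S then 1 else that d i) := by
        intro i hiT
        have hni : 1 ≤ n i := by
          have := Finsupp.mem_support_iff.mp (hTdef ▸ hiT)
          omega
        rw [Finsupp.tsub_apply, oneS_apply]
        by_cases hiS : i ∈ S
        · rw [if_pos hiS, if_pos hiS, mul_one]
        · rw [if_neg hiS, if_neg hiS, Nat.sub_zero]
          conv_lhs => rw [show n i = (n i - 1) + 1 by omega]
          rw [pow_succ]
      have hprod : (∏ i, that d i ^ ((n - oneS S) i)) = q * ∏ i ∈ T \ S, that d i := by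
        rw [hTprod, Finset.prod_congr rfl hpt, Finset.prod_mul_distrib, hq]
        congr 1
        rw [← Finset.prod_sdiff hST,
          Finset.prod_congr rfl (fun i (hi : i ∈ S) => if_pos hi),
          Finset.prod_congr rfl (fun i (hi : i ∈ T \ S) => if_neg (Finset.mem_sdiff.mp hi).2),
          Finset.prod_const_one, mul_one]
      rw [hprod, prod_X_eq_monomial]
      have hsplit : n = oneS S + (n - oneS S) := (add_tsub_cancel_of_le hle).symm
      calc MvPolynomial.coeff (n - oneS S) (q * ∏ i ∈ T \ S, that d i)
          = MvPolynomial.coeff (oneS S + (n - oneS S))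
              (monomial (oneS S) (1 : ℤ) * (q * ∏ i ∈ T \ S, that d i)) := by
            rw [MvPolynomial.coeff_monomial_mul, one_mul]
        _ = MvPolynomial.coeff n (q * (monomial (oneS S) 1 * ∏ i ∈ T \ S, that d i)) := by
            rw [← hsplit]
            congr 1
            ring
    rw [Finset.sum_congr rfl hterm, ← MvPolynomial.coeff_sum]
    have hpull : ∑ S ∈ T.powerset,
        C (1 - (S.card : ℤ)) * (q * ((∏ i ∈ S, X i) * ∏ i ∈ T \ S, that d i))
        = q * ∑ S ∈ T.powerset,
            C (1 - (S.card : ℤ)) * ((∏ i ∈ S, X i) * ∏ i ∈ T \ S, that d i) := by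
      rw [Finset.mul_sum]
      exact Finset.sum_congr rfl fun S _ => by ring
    rw [hpull, bracket T hT]
    have hdistr : q * ((∑ i ∈ Finset.univ \ T, X i) * sPol d ^ (T.card - 1))
        = ∑ i ∈ Finset.univ \ T, X i * (q * sPol d ^ (T.card - 1)) := by
      rw [Finset.sum_mul, Finset.mul_sum]
      exact Finset.sum_congr rfl fun i _ => by ring
    rw [hdistr, MvPolynomial.coeff_sum]
    refine Finset.sum_eq_zero fun i hi => ?_
    rw [MvPolynomial.coeff_X_mul', if_neg]
    exact fun hmem => (Finset.mem_sdiff.mp hi).2 (hTdef ▸ hmem)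

lemma cFull_eq_sum (m : Fin d → ℕ) :
    cFull d m = ∑ k ∈ Fintype.piFinset (fun i => Finset.range (m i)), fC d k := by
  classical
  by_cases h : ∀ i, 1 ≤ m i
  · rw [cFull, if_pos h, c, cPoly, Finset.prod_univ_sum, MvPolynomial.coeff_sum]
    refine Finset.sum_congr rfl fun k hk => ?_
    have hk' : ∀ i, k i < m i := fun i => Finset.mem_range.mp (Fintype.mem_piFinset.mp hk i)
    have hsplit : (∏ i, that d i ^ k i * X i ^ (m i - 1 - k i) : MvPolynomial (Fin d) ℤ)
        = monomial (Finsupp.equivFunOnFinite.symm fun i => m i - 1 - k i) 1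
            * ∏ i, that d i ^ k i := by
      rw [Finset.prod_mul_distrib, ← prod_X_pow_fun]
      ring
    rw [hsplit]
    have hidx : (Finsupp.equivFunOnFinite.symm fun i => m i - 1)
        = (Finsupp.equivFunOnFinite.symm fun i => m i - 1 - k i)
          + Finsupp.equivFunOnFinite.symm k := by
      ext i
      show m i - 1 = (m i - 1 - k i) + k i
      have h1 := h i
      have h2 := hk' i
      omega
    rw [hidx, MvPolynomial.coeff_monomial_mul, one_mul, fC, fPoly_eq]
  · rw [cFull, if_neg h]
    push_neg at h
    obtain ⟨i, hi⟩ := h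
    have hmi : m i = 0 := by omega
    symm
    refine Finset.sum_eq_zero fun k hk => absurd (Fintype.mem_piFinset.mp hk i) ?_
    rw [hmi]
    simp

lemma key1 (n : Fin d →₀ ℕ) :
    ∑ S ∈ (Finset.univ : Finset (Fin d)).powerset,
        ((-1 : ℤ) ^ S.card) * (if oneS S ≤ n then cFull d (fun i => (n - oneS S) i) else 0)
      = if oneS (Finset.univ : Finset (Fin d)) ≤ n
          then fC d (fun i => (n - oneS (Finset.univ : Finset (Fin d))) i) else 0 := by
  classical
  have hbox : ∀ S : Finset (Fin d),
      (if oneS S ≤ n then cFull d (fun i => (n - oneS S) i) else 0)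
      = ∑ k ∈ Fintype.piFinset (fun i => Finset.range (n i)),
          (if S ⊆ Finset.univ.filter (fun i => k i + 2 ≤ n i) then fC d k else 0) := by
    intro S
    by_cases h : oneS S ≤ n
    · rw [if_pos h, cFull_eq_sum, ← Finset.sum_filter]
      refine Finset.sum_congr ?_ fun _ _ => rfl
      ext k
      simp only [Fintype.mem_piFinset, Finset.mem_filter, Finset.mem_range,
        Finsupp.tsub_apply, oneS_apply, Finset.subset_iff, Finset.mem_univ, true_and]
      constructor
      · intro hk
        constructor
        · intro i
          have := hk i
          split_ifs at this <;> omega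
        · intro i hiS
          have h1 := hk i
          rw [if_pos hiS] at h1
          have h2 := (oneS_le_iff S n).mp h i hiS
          omega
      · rintro ⟨h1, h2⟩ i
        by_cases hiS : i ∈ S
        · rw [if_pos hiS]
          have := h2 hiS
          omega
        · rw [if_neg hiS]
          have := h1 i
          omega
    · rw [if_neg h]
      symm
      refine Finset.sum_eq_zero fun k hk => ?_
      rw [if_neg]
      intro hsub
      obtain ⟨i, hiS, hni⟩ : ∃ i ∈ S, n i = 0 := by
        by_contra hc
        push_neg at hc
        exact h ((oneS_le_iff S n).mpr fun i hi => by have := hc i hi; omega)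
      have := (Finset.mem_filter.mp (hsub hiS)).2
      omega
  rw [Finset.sum_congr rfl fun S _ => by rw [hbox S]]
  simp_rw [Finset.mul_sum]
  rw [Finset.sum_comm]
  have hin : ∀ k : Fin d → ℕ,
      ∑ S ∈ (Finset.univ : Finset (Fin d)).powerset,
        ((-1 : ℤ) ^ S.card) * (if S ⊆ Finset.univ.filter (fun i => k i + 2 ≤ n i)
          then fC d k else 0)
      = (if Finset.univ.filter (fun i => k i + 2 ≤ n i) = ∅ then 1 else 0) * fC d k := by
    intro k
    set U := Finset.univ.filter (fun i => k i + 2 ≤ n i) with hU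
    have h1 : ∀ S : Finset (Fin d), ((-1 : ℤ) ^ S.card) * (if S ⊆ U then fC d k else 0)
        = if S ∈ U.powerset then ((-1 : ℤ) ^ S.card) * fC d k else 0 := by
      intro S
      by_cases hS : S ⊆ U
      · rw [if_pos hS, if_pos (Finset.mem_powerset.mpr hS)]
      · rw [if_neg hS, if_neg (fun h => hS (Finset.mem_powerset.mp h)), mul_zero]
    rw [Finset.sum_congr rfl fun S _ => h1 S, Finset.sum_ite_mem,
      Finset.inter_eq_right.mpr (fun S hS => Finset.mem_powerset.mpr (Finset.subset_univ S)),
      ← Finset.sum_mul, Finset.sum_powerset_neg_one_pow_card]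
  rw [Finset.sum_congr rfl fun k _ => hin k]
  simp_rw [ite_mul, one_mul, zero_mul]
  rw [← Finset.sum_filter]
  by_cases hn : ∀ i, 1 ≤ n i
  · have hone : oneS (Finset.univ : Finset (Fin d)) ≤ n :=
      (oneS_le_iff _ n).mpr fun i _ => hn i
    rw [if_pos hone]
    have hkey : (Fintype.piFinset (fun i => Finset.range (n i))).filter
          (fun k => Finset.univ.filter (fun i => k i + 2 ≤ n i) = ∅)
        = {fun i => n i - 1} := by
      ext k
      simp only [Finset.mem_filter, Fintype.mem_piFinset, Finset.mem_range,
        Finset.mem_singleton, Finset.filter_eq_empty_iff, Finset.mem_univ, true_implies]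
      constructor
      · rintro ⟨h1, h2⟩
        funext i
        have ha := h1 i
        have hb := @h2 i
        have hc := hn i
        omega
      · rintro rfl
        constructor
        · intro i
          have := hn i
          show n i - 1 < n i
          omega
        · intro i
          have := hn i
          show ¬(n i - 1 + 2 ≤ n i)
          omega
    rw [hkey, Finset.sum_singleton]
    congr 1
    funext i
    rw [Finsupp.tsub_apply, oneS_apply, if_pos (Finset.mem_univ i)]
  · push_neg at hn
    obtain ⟨i, hi⟩ := hn
    have hnle : ¬ oneS (Finset.univ : Finset (Fin d)) ≤ n := by
      intro hle
      have := (oneS_le_iff _ n).mp hle i (Finset.mem_univ i)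
      omega
    rw [if_neg hnle]
    refine Finset.sum_eq_zero fun k hk => ?_
    have := Finset.mem_range.mp
      (Fintype.mem_piFinset.mp (Finset.mem_filter.mp hk).1 i)
    omega

lemma Cser_mul_A :
    Cser d * (((∏ i, (1 - X i)) : MvPolynomial (Fin d) ℤ) : MvPowerSeries (Fin d) ℤ)
      = ((∏ i, X i : MvPolynomial (Fin d) ℤ) : MvPowerSeries (Fin d) ℤ) * Fser d := by
  classical
  refine MvPowerSeries.ext fun n => ?_
  rw [Apoly, coeff_mul_coe_sum (Cser d) n (fun S => (-1 : ℤ) ^ S.card)]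
  simp_rw [coeff_Cser]
  rw [show (∏ i, X i : MvPolynomial (Fin d) ℤ) = monomial (oneS Finset.univ) 1 from
    prod_X_eq_monomial Finset.univ, MvPolynomial.coe_monomial,
    MvPowerSeries.coeff_monomial_mul]
  simp_rw [one_mul, coeff_Fser]
  exact key1 n

lemma Fser_mul_B :
    Fser d * ((1 - ∑ i ∈ Finset.Icc 2 d, ((i : ℤ) - 1) • MvPolynomial.esymm (Fin d) ℤ i :
        MvPolynomial (Fin d) ℤ) : MvPowerSeries (Fin d) ℤ) = 1 := by
  classical
  refine MvPowerSeries.ext fun n => ?_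
  rw [Bpoly, coeff_mul_coe_sum (Fser d) n (fun S => 1 - (S.card : ℤ))]
  simp_rw [coeff_Fser]
  rw [key2 n, MvPowerSeries.coeff_one]

end Aux

/-- `∑_m c(m_1,…,m_d) x_1^{m_1}⋯x_d^{m_d}
  = (∏ x_i) (∏ (1-x_i))⁻¹ (1 - ∑_{i=2}^d (i-1) e_i(x))⁻¹`, stated by multiplying
through by the two (invertible) denominators. -/
theorem gf_c_eq (d : ℕ) :
    Cser d *
        (((∏ i, (1 - X i)) *
            (1 - ∑ i ∈ Finset.Icc 2 d, ((i : ℤ) - 1) • MvPolynomial.esymm (Fin d) ℤ i) :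
          MvPolynomial (Fin d) ℤ) : MvPowerSeries (Fin d) ℤ) =
      ((∏ i, X i : MvPolynomial (Fin d) ℤ) : MvPowerSeries (Fin d) ℤ) := by
  rw [MvPolynomial.coe_mul, ← mul_assoc, Cser_mul_A, mul_assoc, Fser_mul_B, mul_one]
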